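/- Dwork's lemma (variant with truncated Frobenius lifts): Let R be a commutative ring and m ≥ 1 an integer. Assume that for every prime number p dividing m there exists a ring homomorphism φ_p : R → R/p^{v_p(m)}R such that φ_p(x) ≡ x^p modulo pR for all x ∈ R. Then for every family (x_e)_{e|m} of elements of R indexed by the divisors of m, the following are equivalent: (1) there exists a family (b_d)_{d|m} of elements of R such that x_e = ∑_{d|e} d·b_d^{e/d} for every divisor e of m; (2) for every prime number p and every divisor e of m with p | e, one has x_e ≡ φ_p(x_{e/p}) in R/p^{v_p(e)}R, where φ_p(x_{e/p}) is reduced along the canonical projection R/p^{v_p(m)}R → R/p^{v_p(e)}R. -/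

import Mathlib

/-- The canonical projection `R/p^a R → R/p^b R` for `b ≤ a`. -/
def padicProj {R : Type*} [CommRing R] (p : R) {a b : ℕ} (h : b ≤ a) :
    R ⧸ Ideal.span {p ^ a} →+* R ⧸ Ideal.span {p ^ b} :=
  Ideal.Quotient.factor (Ideal.span_singleton_le_span_singleton.mpr (pow_dvd_pow p h))

/-- Monotonicity of `p`-adic valuations along divisibility. -/
theorem factorization_le_of_dvd_aux {a b : ℕ} (hb : b ≠ 0) (h : a ∣ b) (p : ℕ) :
    a.factorization p ≤ b.factorization p := by
  rcases eq_or_ne a 0 with rfl | ha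
  · exact absurd (zero_dvd_iff.mp h) hb
  · exact (Nat.factorization_le_iff_dvd ha hb).mpr h p

section Aux

variable {R : Type*} [CommRing R]

lemma padicProj_mk {p : R} {a b : ℕ} (h : b ≤ a) (x : R) :
    padicProj p h (Ideal.Quotient.mk _ x) = Ideal.Quotient.mk _ x :=
  Ideal.Quotient.factor_mk _ x

/-- If `p^{v_p(n)} ∣ r` in `R` for every prime `p ∣ n`, then `(n : R) ∣ r`. -/
lemma natCast_dvd_of_prime_pow_dvd (n : ℕ) (hn : n ≠ 0) (r : R)
    (h : ∀ p : ℕ, p.Prime → p ∣ n → ((p : R) ^ n.factorization p) ∣ r) : (n : R) ∣ r := by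
  have hcast : (n : R) = ∏ p ∈ n.primeFactors, (p : R) ^ n.factorization p := by
    conv_lhs => rw [← Nat.factorization_prod_pow_eq_self hn]
    rw [Finsupp.prod, Nat.support_factorization]
    push_cast
    rfl
  rw [hcast]
  apply Finset.prod_dvd_of_coprime
  · intro p hp q hq hpq
    have hp' := Nat.prime_of_mem_primeFactors hp
    have hq' := Nat.prime_of_mem_primeFactors hq
    have h2 : Nat.Coprime (p ^ n.factorization p) (q ^ n.factorization q) :=
      Nat.Coprime.pow _ _ ((Nat.coprime_primes hp' hq').mpr hpq)
    simpa using h2.cast (R := R)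
  · intro p hp
    exact h p (Nat.prime_of_mem_primeFactors hp) (Nat.dvd_of_mem_primeFactors hp)

/-- The key divisibility computation shared by both directions of Dwork's lemma. -/
lemma key_dvd {p e : ℕ} (hp : p.Prime) (he : e ≠ 0) (hpe : p ∣ e)
    (b c : ℕ → R) (hc : ∀ d, (p : R) ∣ c d - b d ^ p) :
    ((p : R) ^ e.factorization p) ∣
      (∑ d ∈ e.divisors, (d : R) * b d ^ (e / d)) -
        ∑ d ∈ (e / p).divisors, (d : R) * c d ^ (e / p / d) := by
  set k := e.factorization p with hk
  have hk1 : 1 ≤ k := hp.factorization_pos_of_dvd he hpe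
  have hep0 : e / p ≠ 0 := (Nat.div_pos (Nat.le_of_dvd (Nat.pos_of_ne_zero he) hpe) hp.pos).ne'
  have hepk : (e / p).factorization p = k - 1 := by
    rw [Nat.factorization_div hpe, Finsupp.tsub_apply, hp.factorization, Finsupp.single_eq_same]
  have hsub : (e / p).divisors ⊆ e.divisors :=
    Nat.divisors_subset_of_dvd he (Nat.div_dvd_of_dvd hpe)
  have hsplit : (∑ d ∈ e.divisors, (d : R) * b d ^ (e / d)) -
      ∑ d ∈ (e / p).divisors, (d : R) * c d ^ (e / p / d) =
      (∑ d ∈ e.divisors \ (e / p).divisors, (d : R) * b d ^ (e / d)) +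
      ∑ d ∈ (e / p).divisors, ((d : R) * b d ^ (e / d) - (d : R) * c d ^ (e / p / d)) := by
    rw [Finset.sum_sub_distrib, ← Finset.sum_sdiff hsub]
    ring
  rw [hsplit]
  apply dvd_add
  · -- divisors of e not dividing e/p have full p-adic valuation k
    apply Finset.dvd_sum
    intro d hd
    rw [Finset.mem_sdiff] at hd
    obtain ⟨hde, hdep⟩ := hd
    rw [Nat.mem_divisors] at hde
    have hd0 : d ≠ 0 := fun h0 => he (zero_dvd_iff.mp (h0 ▸ hde.1))
    have hkd : k ≤ d.factorization p := by
      by_contra hlt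
      push_neg at hlt
      apply hdep
      rw [Nat.mem_divisors]
      refine ⟨(Nat.factorization_le_iff_dvd hd0 hep0).mp ?_, hep0⟩
      intro q
      rcases eq_or_ne q p with rfl | hq
      · rw [hepk]; omega
      · rw [Nat.factorization_div hpe, Finsupp.tsub_apply, hp.factorization,
          Finsupp.single_eq_of_ne' (Ne.symm hq), Nat.sub_zero]
        exact factorization_le_of_dvd_aux he hde.1 q
    have : (p : R) ^ k ∣ (d : R) := by
      have h1 : (p ^ k : ℕ) ∣ d := dvd_trans (pow_dvd_pow p hkd) (Nat.ordProj_dvd d p)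
      exact_mod_cast (Nat.cast_dvd_cast h1 : ((p ^ k : ℕ) : R) ∣ (d : R))
    exact this.mul_right _
  · apply Finset.dvd_sum
    intro d hd
    rw [Nat.mem_divisors] at hd
    obtain ⟨hdep, -⟩ := hd
    have hd0 : d ≠ 0 := fun h0 => hep0 (zero_dvd_iff.mp (h0 ▸ hdep))
    set a := d.factorization p with ha
    have hak : a ≤ k - 1 := hepk ▸ factorization_le_of_dvd_aux hep0 hdep p
    set n := e / p / d with hn
    set j := n.factorization p with hj
    have hjval : j = k - 1 - a := by
      rw [hj, hn, Nat.factorization_div hdep, Finsupp.tsub_apply, hepk, ha]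
    -- e / d = p * n
    obtain ⟨t, ht⟩ := hdep
    have hnt : n = t := by rw [hn, ht, Nat.mul_div_cancel_left _ (Nat.pos_of_ne_zero hd0)]
    have hed : e / d = p * n := by
      have he' : e = d * (p * t) := by
        rw [← Nat.div_mul_cancel hpe, ht]; ring
      rw [he', Nat.mul_div_cancel_left _ (Nat.pos_of_ne_zero hd0), hnt]
    -- p^a ∣ d
    have hpad : (p : R) ^ a ∣ (d : R) := by
      have h1 : (p ^ a : ℕ) ∣ d := Nat.ordProj_dvd d p
      exact_mod_cast (Nat.cast_dvd_cast h1 : ((p ^ a : ℕ) : R) ∣ (d : R))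
    -- p^(j+1) ∣ b d ^ (e/d) - c d ^ n
    have hpow : (p : R) ^ (j + 1) ∣ b d ^ (e / d) - c d ^ n := by
      set u := n / p ^ j with hu
      have hnu : n = p ^ j * u := by
        simp only [hu, hj]
        exact (Nat.ordProj_mul_ordCompl_eq_self n p).symm
      have h1 : (p : R) ^ (j + 1) ∣ c d ^ p ^ j - (b d ^ p) ^ p ^ j :=
        dvd_sub_pow_of_dvd_sub (hc d) j
      have h2 : (p : R) ^ (j + 1) ∣ (c d ^ p ^ j) ^ u - ((b d ^ p) ^ p ^ j) ^ u :=
        h1.trans (sub_dvd_pow_sub_pow _ _ u)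
      have e1 : (c d ^ p ^ j) ^ u = c d ^ n := by rw [← pow_mul, ← hnu]
      have e2 : ((b d ^ p) ^ p ^ j) ^ u = b d ^ (e / d) := by
        rw [← pow_mul, ← pow_mul, hed, hnu]
      rw [e1, e2] at h2
      exact dvd_sub_comm.mp h2
    have hfac : (d : R) * b d ^ (e / d) - (d : R) * c d ^ (e / p / d) =
        (d : R) * (b d ^ (e / d) - c d ^ n) := by rw [hn]; ring
    rw [hfac]
    have : (p : R) ^ (a + (j + 1)) ∣ (d : R) * (b d ^ (e / d) - c d ^ n) := by
      rw [pow_add]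
      exact mul_dvd_mul hpad hpow
    have hexp : a + (j + 1) = k := by omega
    rwa [hexp] at this
end Aux

theorem dwork_lemma {R : Type*} [CommRing R] (m : ℕ) (hm : 1 ≤ m)
    (φ : ∀ p : ℕ, p.Prime → p ∣ m → R →+* R ⧸ Ideal.span {(p : R) ^ m.factorization p})
    (hφ : ∀ (p : ℕ) (hp : p.Prime) (hpm : p ∣ m) (x : R),
      padicProj (p : R) (by exact hp.factorization_pos_of_dvd (by omega) hpm)
          (φ p hp hpm x) =
        Ideal.Quotient.mk (Ideal.span {(p : R) ^ 1}) (x ^ p))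
    (x : ℕ → R) :
    (∃ b : ℕ → R, ∀ e ∈ m.divisors, x e = ∑ d ∈ e.divisors, (d : R) * b d ^ (e / d)) ↔
      ∀ (p : ℕ) (hp : p.Prime) (e : ℕ) (hem : e ∣ m) (hpe : p ∣ e),
        Ideal.Quotient.mk (Ideal.span {(p : R) ^ e.factorization p}) (x e) =
          padicProj (p : R) (factorization_le_of_dvd_aux (by omega) hem p)
            (φ p hp (hpe.trans hem) (x (e / p))) := by
  have hm0 : m ≠ 0 := by omega
  -- Common construct: lifts of `φ p (b d)` with the mod-p property
  have lift : ∀ (p : ℕ) (hp : p.Prime) (hpm : p ∣ m) (b : ℕ → R),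
      ∃ c : ℕ → R, (∀ d, (p : R) ∣ c d - b d ^ p) ∧
        ∀ d, Ideal.Quotient.mk (Ideal.span {(p : R) ^ m.factorization p}) (c d) =
          φ p hp hpm (b d) := by
    intro p hp hpm b
    choose c hc using fun d => Ideal.Quotient.mk_surjective (I := Ideal.span
      {(p : R) ^ m.factorization p}) (φ p hp hpm (b d))
    refine ⟨c, fun d => ?_, hc⟩
    have h1 := hφ p hp hpm (b d)
    rw [← hc d, padicProj_mk] at h1
    have := Ideal.Quotient.eq.mp h1
    rwa [Ideal.mem_span_singleton, pow_one] at this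
  constructor
  · rintro ⟨b, hb⟩ p hp e hem hpe
    have he0 : e ≠ 0 := fun h0 => hm0 (zero_dvd_iff.mp (h0 ▸ hem))
    obtain ⟨c, hc1, hc2⟩ := lift p hp (hpe.trans hem) b
    have hepm : e / p ∈ m.divisors :=
      Nat.mem_divisors.mpr ⟨(Nat.div_dvd_of_dvd hpe).trans hem, hm0⟩
    have hφx : φ p hp (hpe.trans hem) (x (e / p)) =
        Ideal.Quotient.mk _ (∑ d ∈ (e / p).divisors, (d : R) * c d ^ (e / p / d)) := by
      rw [hb _ hepm, map_sum, map_sum]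
      apply Finset.sum_congr rfl
      intro d _
      rw [map_mul, map_pow, map_natCast, ← hc2 d, map_mul, map_pow, map_natCast]
    rw [hφx, padicProj_mk]
    rw [hb e (Nat.mem_divisors.mpr ⟨hem, hm0⟩)]
    rw [Ideal.Quotient.eq, Ideal.mem_span_singleton]
    exact key_dvd hp he0 hpe b c hc1
  · intro H
    -- inductive construction of the Witt coordinates
    suffices h : ∀ N : ℕ, ∃ b : ℕ → R, ∀ e ∈ m.divisors, e ≤ N →
        x e = ∑ d ∈ e.divisors, (d : R) * b d ^ (e / d) by
      obtain ⟨b, hb⟩ := h m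
      exact ⟨b, fun e he => hb e he (Nat.divisor_le he)⟩
    intro N
    induction N with
    | zero =>
      exact ⟨fun _ => 0, fun e he hle => absurd (Nat.pos_of_mem_divisors he) (by omega)⟩
    | succ N ih =>
      obtain ⟨b, hb⟩ := ih
      by_cases hN : (N + 1) ∈ m.divisors
      · set e := N + 1 with heN
        have he0 : e ≠ 0 := by omega
        have hem : e ∣ m := (Nat.mem_divisors.mp hN).1
        set b0 : ℕ → R := Function.update b e 0 with hb0def
        have hb0 : ∀ f ∈ m.divisors, f ≤ N →
            x f = ∑ d ∈ f.divisors, (d : R) * b0 d ^ (f / d) := by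
          intro f hf hfle
          rw [hb f hf hfle]
          apply Finset.sum_congr rfl
          intro d hd
          have hdle : d ≤ f := Nat.divisor_le hd
          have hdne : d ≠ e := by omega
          rw [hb0def, Function.update_of_ne hdne]
        set r := x e - ∑ d ∈ e.divisors, (d : R) * b0 d ^ (e / d) with hr
        have hdvd : (e : R) ∣ r := by
          apply natCast_dvd_of_prime_pow_dvd e he0
          intro p hp hpe
          obtain ⟨c, hc1, hc2⟩ := lift p hp (hpe.trans hem) b0
          have hepm : e / p ∈ m.divisors :=
            Nat.mem_divisors.mpr ⟨(Nat.div_dvd_of_dvd hpe).trans hem, hm0⟩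
          have heple : e / p ≤ N := by
            have := Nat.div_lt_self (by omega : 0 < e) hp.one_lt
            omega
          have hφx : φ p hp (hpe.trans hem) (x (e / p)) =
              Ideal.Quotient.mk _ (∑ d ∈ (e / p).divisors, (d : R) * c d ^ (e / p / d)) := by
            rw [hb0 _ hepm heple, map_sum, map_sum]
            apply Finset.sum_congr rfl
            intro d _
            rw [map_mul, map_pow, map_natCast, ← hc2 d, map_mul, map_pow, map_natCast]
          have h1 := H p hp e hem hpe
          rw [hφx, padicProj_mk, Ideal.Quotient.eq, Ideal.mem_span_singleton] at h1
          have h2 := key_dvd (R := R) hp he0 hpe b0 c hc1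
          have : r = (x e - ∑ d ∈ (e / p).divisors, (d : R) * c d ^ (e / p / d)) -
              ((∑ d ∈ e.divisors, (d : R) * b0 d ^ (e / d)) -
                ∑ d ∈ (e / p).divisors, (d : R) * c d ^ (e / p / d)) := by
            rw [hr]; ring
          rw [this]
          exact dvd_sub h1 h2
        obtain ⟨y, hy⟩ := hdvd
        refine ⟨Function.update b0 e y, fun f hf hfle => ?_⟩
        rcases Nat.lt_succ_iff_lt_or_eq.mp (Nat.lt_succ_of_le hfle) with hflt | rfl
        · rw [hb0 f hf (by omega)]
          apply Finset.sum_congr rfl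
          intro d hd
          have hdle : d ≤ f := Nat.divisor_le hd
          rw [Function.update_of_ne (by omega)]
        · -- f = N + 1 = e
          have hee : e ∈ e.divisors := Nat.mem_divisors_self e he0
          rw [← Finset.sum_erase_add _ _ hee]
          have hterm : ∀ d ∈ e.divisors.erase e,
              (d : R) * (Function.update b0 e y) d ^ (e / d) = (d : R) * b0 d ^ (e / d) := by
            intro d hd
            rw [Function.update_of_ne (Finset.ne_of_mem_erase hd)]
          rw [Finset.sum_congr rfl hterm, Function.update_self, Nat.div_self (by omega),
            pow_one]
          have hsum : ∑ d ∈ e.divisors.erase e, (d : R) * b0 d ^ (e / d) =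
              (∑ d ∈ e.divisors, (d : R) * b0 d ^ (e / d)) := by
            rw [← Finset.sum_erase_add _ _ hee, hb0def, Function.update_self]
            simp [Nat.div_self (show 0 < e by omega)]
          rw [hsum]
          rw [hr] at hy
          linear_combination hy
      · refine ⟨b, fun f hf hfle => ?_⟩
        rcases Nat.lt_succ_iff_lt_or_eq.mp (Nat.lt_succ_of_le hfle) with hflt | rfl
        · exact hb f hf (by omega)
        · exact absurd hf hN
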